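/- Fix $0<\lambda\leq\Lambda$, set $Q=10$ and $\beta = \frac{\Lambda}{\lambda}(Q-1)+1$, and let $\rho$ be the H-type gauge on $\mathbb{R}^7$. Then the function $\varphi_2(\rho) = \rho^{2-\beta}$ is a classical solution of $\mathcal{M}^+_{\lambda,\Lambda}((D^2_{\mathbb{H}}u)^*) = 0$ on $\mathbb{R}^7\setminus\{0\}$, i.e. at every point with $\rho\neq 0$ one has $-\lambda\, \varphi_2''(\rho)\,|D_{\mathbb{H}}\rho|^2 - \Lambda(Q-1)\frac{\varphi_2'(\rho)}{\rho}|D_{\mathbb{H}}\rho|^2 = 0$ (using that $\varphi_2$ is convex and decreasing). -/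

import Mathlib

noncomputable section

/-- `|x_H|² = x₁²+x₂²+x₃²+x₄²` on `ℝ⁷` with coordinates `(x₁,x₂,x₃,x₄,t₁,t₂,t₃)`. -/
def xH2 (p : Fin 7 → ℝ) : ℝ := p 0 ^ 2 + p 1 ^ 2 + p 2 ^ 2 + p 3 ^ 2

/-- H-type gauge `ρ = (|x_H|⁴ + t₁²+t₂²+t₃²)^{1/4}` on `ℝ⁷`. -/
def rhoH (p : Fin 7 → ℝ) : ℝ := (xH2 p ^ 2 + p 4 ^ 2 + p 5 ^ 2 + p 6 ^ 2) ^ (1/4 : ℝ)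

lemma deriv_rpow_pos (a : ℝ) {r : ℝ} (hr : 0 < r) :
    deriv (fun x : ℝ => x ^ a) r = a * r ^ (a - 1) :=
  Real.deriv_rpow_const _ _

lemma deriv_deriv_rpow_pos (a : ℝ) {r : ℝ} (hr : 0 < r) :
    deriv (deriv (fun x : ℝ => x ^ a)) r = a * ((a - 1) * r ^ (a - 1 - 1)) := by
  have h : deriv (fun x : ℝ => x ^ a) =ᶠ[nhds r] fun x => a * x ^ (a - 1) := by
    filter_upwards [eventually_gt_nhds hr] with x hx
    exact deriv_rpow_pos a hx
  rw [h.deriv_eq]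
  rw [deriv_const_mul _ (Real.differentiableAt_rpow_const_of_ne _ hr.ne'),
    Real.deriv_rpow_const _ _]

/-- with `0 < λ ≤ Λ`, `Q = 10`, `β = (Λ/λ)(Q-1)+1`, the function
`φ₂(ρ) = ρ^{2-β}` (convex and decreasing) solves the Pucci maximal equation
`𝓜⁺_{λ,Λ}((D²_ℍ u)*) = 0` on `ℝ⁷ \ {0}`, i.e. at every point with `ρ ≠ 0`,
`-λ φ₂''(ρ)|D_ℍρ|² - Λ(Q-1)(φ₂'(ρ)/ρ)|D_ℍρ|² = 0`, where `|D_ℍρ|² = |x_H|²/ρ²`. -/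
theorem stmt5 (lam Lam : ℝ) (h0 : 0 < lam) (h1 : lam ≤ Lam)
    (β : ℝ) (hβ : β = Lam / lam * (10 - 1) + 1)
    (φ : ℝ → ℝ) (hφ : φ = fun r : ℝ => r ^ ((2 : ℝ) - β)) :
    ∀ p : Fin 7 → ℝ, rhoH p ≠ 0 →
      -lam * deriv (deriv φ) (rhoH p) * (xH2 p / rhoH p ^ 2)
        - Lam * (10 - 1) * (deriv φ (rhoH p) / rhoH p) * (xH2 p / rhoH p ^ 2) = 0 := by
  intro p hp
  set r := rhoH p with hrdef
  have hr : 0 < r := by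
    have : 0 ≤ r := Real.rpow_nonneg (by positivity) _
    exact lt_of_le_of_ne this (Ne.symm hp)
  have hd1 : deriv φ r = (2 - β) * r ^ ((2 : ℝ) - β - 1) := by
    rw [hφ]; exact deriv_rpow_pos _ hr
  have hd2 : deriv (deriv φ) r = (2 - β) * (((2 : ℝ) - β - 1) * r ^ ((2 : ℝ) - β - 1 - 1)) := by
    rw [hφ]; exact deriv_deriv_rpow_pos _ hr
  have hsplit : r ^ ((2 : ℝ) - β - 1) = r ^ ((2 : ℝ) - β - 1 - 1) * r := by
    rw [show (2 : ℝ) - β - 1 = ((2 : ℝ) - β - 1 - 1) + 1 by ring, Real.rpow_add hr,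
      Real.rpow_one]
    norm_num
  rw [hd1, hd2, hsplit]
  have hkey : -lam * ((2 : ℝ) - β - 1) - Lam * 9 = 0 := by
    rw [hβ]; field_simp; ring
  set A := r ^ ((2 : ℝ) - β - 1 - 1)
  have hfact : -lam * ((2 - β) * ((2 - β - 1) * A)) * (xH2 p / r ^ 2)
      - Lam * (10 - 1) * ((2 - β) * (A * r) / r) * (xH2 p / r ^ 2)
      = (-lam * ((2 : ℝ) - β - 1) - Lam * 9) * ((2 - β) * A * (xH2 p / r ^ 2)) := by
    field_simp
    ring
  rw [hfact, hkey, zero_mul]
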